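/- Let P = [a] × [2b] with the partial order described. For every t with 1 ≤ t ≤ a, there exist t pairwise disjoint maximal antichains of P (equivalently, t pairwise disjoint paths from (1, b+h_i) to (a, h_i) for distinct values h_1 < ... < h_t in [b]). -/

import Mathlib

/-- A step moves one unit down `(1,0)` or one unit left `(0,-1)`. -/
def Step (p q : ℤ × ℤ) : Prop := q = p + (1, 0) ∨ q = p + (0, -1)

/-- `l` is a path starting at `p` and ending at `q`, each consecutive
difference being `(1,0)` or `(0,-1)`. -/
def IsPathFromTo (l : List (ℤ × ℤ)) (p q : ℤ × ℤ) : Prop :=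
  l.Chain' Step ∧ l.head? = some p ∧ l.getLast? = some q

/-- Membership in the poset `P = [a] × [2b]`, viewed inside `ℤ × ℤ`. -/
def memP (a b : ℕ) (p : ℤ × ℤ) : Prop :=
  1 ≤ p.1 ∧ p.1 ≤ (a : ℤ) ∧ 1 ≤ p.2 ∧ p.2 ≤ 2 * (b : ℤ)

/-- The partial order on `P = [a] × [2b]`:
`(x,y) ⪯ (z,t)` iff `(x,y) = (z,t)`, or `x < z` and `y < t`,
or `y ≤ b`, `t ≥ b+1` and `y < t - b`. -/
def ple (b : ℕ) (p q : ℤ × ℤ) : Prop :=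
  p = q ∨ (p.1 < q.1 ∧ p.2 < q.2) ∨
    (p.2 ≤ (b : ℤ) ∧ (b : ℤ) + 1 ≤ q.2 ∧ p.2 < q.2 - (b : ℤ))

/-- The `n`-th point of the `i`-th path: go right along row `y = b+i+1` to
`x = i+1`, then down the column `x = i+1` to `y = i+1`, then right along row
`y = i+1`. -/
def pf (b i n : ℕ) : ℤ × ℤ :=
  if n ≤ i then ((n : ℤ) + 1, (b : ℤ) + (i : ℤ) + 1)
  else if n ≤ i + b then ((i : ℤ) + 1, (b : ℤ) + (i : ℤ) + 1 - ((n : ℤ) - (i : ℤ)))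
  else ((n : ℤ) + 1 - (b : ℤ), (i : ℤ) + 1)

lemma step_iff (p q : ℤ × ℤ) :
    Step p q ↔ ((q.1 = p.1 + 1 ∧ q.2 = p.2) ∨ (q.1 = p.1 ∧ q.2 = p.2 - 1)) := by
  simp only [Step, Prod.ext_iff, Prod.fst_add, Prod.snd_add]
  constructor <;> rintro (⟨h1, h2⟩ | ⟨h1, h2⟩) <;> simp_all <;> omega

lemma pf_step (b i n : ℕ) : Step (pf b i n) (pf b i (n + 1)) := by
  rw [step_iff]
  unfold pf
  split_ifs <;> simp <;> omega

theorem stmt_9 (a b t : ℕ) (ha : 2 ≤ a) (hab : a ≤ b) (ht1 : 1 ≤ t) (hta : t ≤ a) :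
    ∃ h : Fin t → ℕ, StrictMono h ∧ (∀ i, 1 ≤ h i ∧ h i ≤ b) ∧
      ∃ l : Fin t → List (ℤ × ℤ),
        (∀ i, IsPathFromTo (l i) (1, (b : ℤ) + (h i : ℤ)) ((a : ℤ), (h i : ℤ))) ∧
        (∀ i j, i ≠ j → ∀ x, x ∈ l i → x ∉ l j) := by
  refine ⟨fun i => i.val + 1, ?_, ?_, fun i => List.map (pf b i.val) (List.range (a + b)), ?_, ?_⟩
  · intro i j hij
    simpa using Nat.add_lt_add_right (Fin.lt_def.mp hij) 1
  · intro i
    have := i.2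
    refine ⟨Nat.le_add_left 1 _, ?_⟩
    show i.val + 1 ≤ b
    omega
  · intro i
    have hi : i.val < t := i.2
    obtain ⟨c, hc⟩ : ∃ c, a + b = c + 1 := ⟨a + b - 1, by omega⟩
    dsimp only
    rw [hc]
    refine ⟨?_, ?_, ?_⟩
    · show List.IsChain _ _
      rw [List.isChain_map, List.isChain_range_succ]
      intro m _
      exact pf_step b i.val m
    · rw [List.head?_map, List.range_succ_eq_map]
      simp only [List.head?_cons, Option.map_some]
      unfold pf
      rw [if_pos (Nat.zero_le _)]
      simp only [Option.some.injEq, Prod.ext_iff]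
      push_cast
      exact ⟨trivial, by ring⟩
    · rw [List.range_succ, List.map_append]
      simp only [List.map_cons, List.map_nil, List.getLast?_concat]
      unfold pf
      have h1 : ¬ (c ≤ i.val) := by omega
      rw [if_neg h1]
      split_ifs with h2 <;>
        · simp only [Option.some.injEq, Prod.ext_iff]
          push_cast
          constructor <;> first | trivial | omega
  · intro i j hij x hxi hxj
    have hij' : i.val ≠ j.val := fun h => hij (Fin.ext h)
    have hi : i.val < t := i.2
    have hj : j.val < t := j.2
    simp only [List.mem_map, List.mem_range] at hxi hxj
    obtain ⟨n, hn, hfn⟩ := hxi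
    obtain ⟨m, hm, hfm⟩ := hxj
    have heq : pf b i.val n = pf b j.val m := by rw [hfn, hfm]
    unfold pf at heq
    split_ifs at heq <;>
      · rw [Prod.ext_iff] at heq
        simp only at heq
        omega
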